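/- Let T be a set with a reduction relation ⟹ and a symmetric equation relation ≡, and let λ assign to every individual ⟹-step and every ≡-step an element of a well-ordered set (W, ≺). Suppose that whenever the one or two steps of a local divergence are replaced by the steps of a corresponding convergence (in the sense of local confluence modulo equations), the multiset of λ-values of the divergence's steps is strictly greater than the multiset of λ-values of the convergence's steps in the Dershowitz–Manna multiset ordering induced by ≺. Then the system is confluent modulo equations if and only if it is locally confluent modulo equations. -/

import Mathlib

/-!
STATEMENT 0: Abstract rewriting system with a reduction relation `R` (⟹) and a
symmetric equation relation `E` (≡), with a measure `λ` on individual steps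
valued in a well-ordered set.  If replacing the steps of any local divergence
by the steps of any corresponding convergence strictly decreases the
Dershowitz–Manna multiset of measures, then the system is confluent modulo
equations iff it is locally confluent modulo equations.
-/

namespace Stmt0

variable {T W : Type*}

/-- Dershowitz–Manna multiset ordering induced by `prec`: `N` is strictly below `M`. -/
def DMlt [DecidableEq W] (prec : W → W → Prop) (N M : Multiset W) : Prop :=
  ∃ X Y : Multiset W, X ≠ 0 ∧ X ≤ M ∧ N = M - X + Y ∧ ∀ y ∈ Y, ∃ x ∈ X, prec y x

/-- Mixed sequences of reduction steps (`R`) and equation steps (`E`). -/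
inductive Path (R E : T → T → Prop) : T → T → Type _ where
  | nil (t : T) : Path R E t t
  | red (a b c : T) : R a b → Path R E b c → Path R E a c
  | eq (a b c : T) : E a b → Path R E b c → Path R E a c

/-- The multiset of `λ`-values of the steps of a mixed sequence, where `lamR`
assigns a measure to each reduction step and `lamE` to each equation step. -/
def Path.measure {R E : T → T → Prop} (lamR lamE : T → T → W) :
    {s t : T} → Path R E s t → Multiset W
  | _, _, .nil _ => 0
  | _, _, .red a b _ _ p => lamR a b ::ₘ Path.measure lamR lamE p
  | _, _, .eq a b _ _ p => lamE a b ::ₘ Path.measure lamR lamE p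

/-- A single step of a chain connecting two terms: a reduction step, a reversed
reduction step, or an equation step. -/
def MixedStep (R E : T → T → Prop) (a b : T) : Prop := R a b ∨ R b a ∨ E a b

/-- Confluence modulo equations: whenever `t` and `s` are connected by a finite
chain of reduction steps, reversed reduction steps and equation steps, they have
reducts connected by equation steps alone. -/
def ConfluentModulo (R E : T → T → Prop) : Prop :=
  ∀ t s : T, Relation.ReflTransGen (MixedStep R E) t s →
    ∃ t₁ s₁ : T, Relation.ReflTransGen R t t₁ ∧ Relation.ReflTransGen R s s₁ ∧
      Relation.ReflTransGen E t₁ s₁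

/-- Local confluence modulo equations. -/
def LocallyConfluentModulo (R E : T → T → Prop) : Prop :=
  (∀ t₀ t₁ t₂ : T, R t₀ t₁ → R t₀ t₂ →
    ∃ u, Nonempty (Path R E t₁ u) ∧ Nonempty (Path R E t₂ u)) ∧
  (∀ t₀ t₁ t₂ : T, R t₀ t₁ → E t₀ t₂ →
    ∃ u t₂', Nonempty (Path R E t₁ u) ∧ R t₂ t₂' ∧ Nonempty (Path R E t₂' u))



open Relation

section DM
set_option linter.unusedSectionVars false

variable [DecidableEq W] {prec : W → W → Prop}

lemma dmlt_mono {N' N M M' : Multiset W} (hN : N' ≤ N) (hM : M ≤ M') (h : DMlt prec N M) :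
    DMlt prec N' M' := by
  classical
  obtain ⟨X, Y, hX0, hXM, hNe, hY⟩ := h
  set A : Multiset W := (M - X) ∩ N' with hA
  have hA1 : A ≤ M - X := Multiset.inter_le_left
  have hA2 : A ≤ N' := Multiset.inter_le_right
  have hAM : A ≤ M := hA1.trans (tsub_le_self)
  have hXle : X ≤ M - A := by
    have h1 : M - (M - X) = X := tsub_tsub_cancel_of_le hXM
    calc X = M - (M - X) := h1.symm
    _ ≤ M - A := tsub_le_tsub_left hA1 M
  refine ⟨(M - A) + (M' - M), N' - A, ?_, ?_, ?_, ?_⟩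
  · intro h0
    apply hX0
    have h1 : M - A = 0 := by
      have : M - A ≤ (M - A) + (M' - M) := self_le_add_right _ _
      rw [h0] at this
      exact Multiset.le_zero.1 this
    rw [h1] at hXle
    exact Multiset.le_zero.1 hXle
  · calc (M - A) + (M' - M) ≤ M + (M' - M) := add_le_add_left tsub_le_self _
    _ = M' := add_tsub_cancel_of_le hM
  · have e1 : M' - ((M - A) + (M' - M)) = A := by
      rw [add_comm, ← tsub_tsub, tsub_tsub_cancel_of_le hM, tsub_tsub_cancel_of_le hAM]
    rw [e1, add_tsub_cancel_of_le hA2]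
  · intro y hy
    have hcnt : A.count y < N'.count y := by
      have h1 : 0 < (N' - A).count y := Multiset.count_pos.2 hy
      rw [Multiset.count_sub] at h1
      omega
    have hMX : (M - X).count y < N'.count y := by
      have : A.count y = min ((M - X).count y) (N'.count y) := by
        rw [hA, Multiset.count_inter]
      omega
    have hNc : N'.count y ≤ N.count y := Multiset.count_le_of_le y hN
    have hYc : 0 < Y.count y := by
      have : N.count y = (M - X).count y + Y.count y := by
        rw [hNe, Multiset.count_add]
      omega
    obtain ⟨x, hx, hpx⟩ := hY y (Multiset.count_pos.1 hYc)
    exact ⟨x, Multiset.mem_of_le (hXle.trans (self_le_add_right _ _)) hx, hpx⟩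

lemma dmlt_context (C : Multiset W) {N M : Multiset W} (h : DMlt prec N M) :
    DMlt prec (C + N) (C + M) := by
  obtain ⟨X, Y, hX0, hXM, hNe, hY⟩ := h
  refine ⟨X, Y, hX0, hXM.trans (self_le_add_left _ _), ?_, hY⟩
  rw [add_tsub_assoc_of_le hXM, hNe, add_assoc]

lemma dm_aux : ∀ X : Multiset W, X ≠ 0 → ∀ Y C : Multiset W,
    (∀ y ∈ Y, ∃ x ∈ X, prec y x) →
    Relation.TransGen (Relation.CutExpand prec) (C + Y) (C + X) := by
  intro X
  induction X using Multiset.induction with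
  | empty => intro h; exact absurd rfl h
  | cons a X ih =>
    intro _ Y C hY
    classical
    by_cases hX : X = 0
    · subst hX
      refine TransGen.single ⟨Y, a, ?_, ?_⟩
      · intro y hy
        obtain ⟨x, hx, hyx⟩ := hY y hy
        rcases Multiset.mem_cons.1 hx with rfl | hx
        · exact hyx
        · exact absurd hx (Multiset.notMem_zero x)
      · rw [← Multiset.singleton_add]; abel
    · set Ya := Y.filter (fun y => prec y a) with hYa
      set Y' := Y.filter (fun y => ¬ prec y a) with hY'
      have hsplit : Ya + Y' = Y := Multiset.filter_add_not _ Y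
      have step1 : CutExpand prec ((C + Ya) + X) (C + (a ::ₘ X)) := by
        refine ⟨Ya, a, ?_, ?_⟩
        · intro y hy; exact (Multiset.mem_filter.1 hy).2
        · rw [← Multiset.singleton_add]; abel
      have step2 : Relation.TransGen (Relation.CutExpand prec) ((C + Ya) + Y') ((C + Ya) + X) := by
        refine ih hX Y' (C + Ya) ?_
        intro y hy
        obtain ⟨hyY, hna⟩ := Multiset.mem_filter.1 hy
        obtain ⟨x, hx, hyx⟩ := hY y hyY
        rcases Multiset.mem_cons.1 hx with rfl | hx
        · exact absurd hyx hna
        · exact ⟨x, hx, hyx⟩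
      have e : C + Y = (C + Ya) + Y' := by rw [add_assoc, hsplit]
      rw [e]
      exact step2.tail step1

lemma dmlt_transGen {N M : Multiset W} (h : DMlt prec N M) :
    Relation.TransGen (Relation.CutExpand prec) N M := by
  obtain ⟨X, Y, hX0, hXM, hNe, hY⟩ := h
  have h1 := dm_aux X hX0 Y (M - X) hY
  rwa [← hNe, tsub_add_cancel_of_le hXM] at h1

lemma tg_context (C : Multiset W) {N M : Multiset W}
    (h : Relation.TransGen (Relation.CutExpand prec) N M) :
    Relation.TransGen (Relation.CutExpand prec) (C + N) (C + M) := by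
  induction h with
  | single h => exact TransGen.single ((Relation.cutExpand_add_left C).2 h)
  | tail _ h ih => exact ih.tail ((Relation.cutExpand_add_left C).2 h)

def DMle (prec : W → W → Prop) (N M : Multiset W) : Prop :=
  N = M ∨ Relation.TransGen (Relation.CutExpand prec) N M

lemma dmle_context (C : Multiset W) {N M : Multiset W} (h : DMle prec N M) :
    DMle prec (C + N) (C + M) :=
  h.imp (fun e => by rw [e]) (tg_context C)

lemma tg_cons (x : W) {N M : Multiset W}
    (h : Relation.TransGen (Relation.CutExpand prec) N M) :
    Relation.TransGen (Relation.CutExpand prec) (x ::ₘ N) (x ::ₘ M) := by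
  have := tg_context {x} h
  simpa [Multiset.singleton_add] using this

lemma dmle_cons (x : W) {N M : Multiset W} (h : DMle prec N M) :
    DMle prec (x ::ₘ N) (x ::ₘ M) :=
  h.imp (fun e => by rw [e]) (tg_cons x)

lemma tg_of_tg_dmle {N M M' : Multiset W}
    (h : Relation.TransGen (Relation.CutExpand prec) N M) (h' : DMle prec M M') :
    Relation.TransGen (Relation.CutExpand prec) N M' := by
  rcases h' with rfl | h'
  · exact h
  · exact h.trans h'

lemma dm_main {N N0 M0 M C Nfull Mfull : Multiset W}
    (hd : DMlt prec N0 M0) (hN : N ≤ N0) (hM : M0 ≤ M)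
    (eN : Nfull = C + N) (eM : Mfull = C + M) :
    Relation.TransGen (Relation.CutExpand prec) Nfull Mfull := by
  rw [eN, eM]
  exact dmlt_transGen (dmlt_context C (dmlt_mono hN hM hd))

lemma pair_le₁ (x y z : W) : ({x, y} : Multiset W) ≤ {x, y, z} := by
  show x ::ₘ y ::ₘ 0 ≤ x ::ₘ y ::ₘ z ::ₘ 0
  exact Multiset.cons_le_cons _ (Multiset.cons_le_cons _ (Multiset.zero_le _))

lemma pair_le₂ (x y z : W) : ({x, y} : Multiset W) ≤ {z, y, x} := by
  show x ::ₘ y ::ₘ 0 ≤ z ::ₘ y ::ₘ x ::ₘ 0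
  rw [Multiset.cons_swap]
  exact Multiset.le_cons_self _ _

lemma dm_pair_count (hirr : ∀ x : W, ¬ prec x x)
    {N : Multiset W} {A : W} (h : DMlt prec N {A, A}) : N.count A ≤ 1 := by
  obtain ⟨X, Y, hX0, hXle, hNe, hY⟩ := h
  have hXA : ∀ x ∈ X, x = A := by
    intro x hx
    have h1 := Multiset.mem_of_le hXle hx
    rcases Multiset.mem_cons.1 h1 with h' | h'
    · exact h'
    · exact Multiset.mem_singleton.1 h'
  have hYA : Y.count A = 0 := by
    rw [Multiset.count_eq_zero]
    intro hA
    obtain ⟨x, hx, hpx⟩ := hY A hA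
    exact hirr A (hXA x hx ▸ hpx)
  have hXA1 : 1 ≤ X.count A := by
    obtain ⟨x, hx⟩ := Multiset.exists_mem_of_ne_zero hX0
    have := hXA x hx
    subst this
    exact Multiset.one_le_count_iff_mem.2 hx
  have hsub : ({A, A} : Multiset W).count A = 2 := by simp
  have hXle2 : X.count A ≤ 2 := hsub ▸ Multiset.count_le_of_le A hXle
  have hNc : N.count A = ({A, A} : Multiset W).count A - X.count A + Y.count A := by
    rw [hNe, Multiset.count_add, Multiset.count_sub]
  omega

end DM

section Chains

set_option linter.unusedSectionVars false

inductive Chain (R E : T → T → Prop) : T → T → Type _ where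
  | nil (a : T) : Chain R E a a
  | fwd (a b c : T) : R a b → Chain R E b c → Chain R E a c
  | bwd (a b c : T) : R b a → Chain R E b c → Chain R E a c
  | eq (a b c : T) : E a b → Chain R E b c → Chain R E a c



variable {R E : T → T → Prop} (lamR lamE : T → T → W)

def Chain.mu : {a b : T} → Chain R E a b → Multiset W
  | _, _, .nil _ => 0
  | _, _, .fwd a b _ _ p => lamR a b ::ₘ p.mu
  | _, _, .bwd a b _ _ p => lamR b a ::ₘ p.mu
  | _, _, .eq a b _ _ p => lamE a b ::ₘ lamE b a ::ₘ p.mu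

def Chain.append : {a b c : T} → Chain R E a b → Chain R E b c → Chain R E a c
  | _, _, _, .nil _, q => q
  | _, _, _, .fwd a b _ h p, q => .fwd a b _ h (p.append q)
  | _, _, _, .bwd a b _ h p, q => .bwd a b _ h (p.append q)
  | _, _, _, .eq a b _ h p, q => .eq a b _ h (p.append q)

lemma Chain.mu_append : ∀ {a b c : T} (p : Chain R E a b) (q : Chain R E b c),
    (p.append q).mu lamR lamE = p.mu lamR lamE + q.mu lamR lamE := by
  intro a b c p q
  induction p with
  | nil => simp [Chain.append, Chain.mu]
  | fwd a b c h p ih => simp [Chain.append, Chain.mu, ih]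
  | bwd a b c h p ih => simp [Chain.append, Chain.mu, ih]
  | eq a b c h p ih => simp [Chain.append, Chain.mu, ih]

def Path.append : {a b c : T} → Path R E a b → Path R E b c → Path R E a c
  | _, _, _, .nil _, q => q
  | _, _, _, .red a b _ h p, q => .red a b _ h (p.append q)
  | _, _, _, .eq a b _ h p, q => .eq a b _ h (p.append q)

lemma Path.measure_append : ∀ {a b c : T} (p : Path R E a b) (q : Path R E b c),
    (p.append q).measure lamR lamE = p.measure lamR lamE + q.measure lamR lamE := by
  intro a b c p q
  induction p with
  | nil => simp [Path.append, Path.measure]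
  | red a b c h p ih => simp [Path.append, Path.measure, ih]
  | eq a b c h p ih => simp [Path.append, Path.measure, ih]

variable (hsymm : ∀ a b, E a b → E b a)

def Path.pump : {a b : T} → Path R E a b → Path R E a b
  | _, _, .nil a => .nil a
  | _, _, .red a b c h p => .red a b c h (p.pump)
  | _, _, .eq a b c h p => .eq a b c h (.eq b a c (hsymm a b h) (.eq a b c h (p.pump)))

def spliceF : {a b : T} → Path R E a b → Chain R E a b
  | _, _, .nil a => .nil a
  | _, _, .red a b c h p => .fwd a b c h (spliceF p)
  | _, _, .eq a b c h p => .eq a b c h (spliceF p)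

def spliceRev : {a b : T} → Path R E a b → Chain R E b a
  | _, _, .nil a => .nil a
  | _, _, .red a b _ h p => (spliceRev p).append (.bwd b a a h (.nil a))
  | _, _, .eq a b _ h p => (spliceRev p).append (.eq b a a (hsymm a b h) (.nil a))

lemma mu_spliceF_le : ∀ {a b : T} (p : Path R E a b),
    (spliceF p).mu lamR lamE ≤ (p.pump hsymm).measure lamR lamE := by
  intro a b p
  induction p with
  | nil => simp [spliceF, Path.pump, Chain.mu, Path.measure]
  | red a b c h p ih =>
    simp only [spliceF, Path.pump, Chain.mu, Path.measure]
    exact Multiset.cons_le_cons _ ih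
  | eq a b c h p ih =>
    simp only [spliceF, Path.pump, Chain.mu, Path.measure]
    exact Multiset.cons_le_cons _ (Multiset.cons_le_cons _
      (ih.trans (Multiset.le_cons_self _ _)))

lemma mu_spliceRev_le : ∀ {a b : T} (p : Path R E a b),
    (spliceRev hsymm p).mu lamR lamE ≤ (p.pump hsymm).measure lamR lamE := by
  intro a b p
  induction p with
  | nil => simp [spliceRev, Path.pump, Chain.mu, Path.measure]
  | red a b c h p ih =>
    simp only [spliceRev, Path.pump, Chain.mu, Path.measure, Chain.mu_append,
      ← Multiset.singleton_add, add_zero]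
    have e1 : (spliceRev hsymm p).mu lamR lamE + {lamR a b}
        = {lamR a b} + (spliceRev hsymm p).mu lamR lamE := by abel
    rw [e1]
    exact add_le_add_right ih _
  | eq a b c h p ih =>
    simp only [spliceRev, Path.pump, Chain.mu, Path.measure, Chain.mu_append,
      ← Multiset.singleton_add, add_zero]
    have e1 : (spliceRev hsymm p).mu lamR lamE + ({lamE b a} + {lamE a b})
        = {lamE a b} + ({lamE b a} + (spliceRev hsymm p).mu lamR lamE) := by abel
    rw [e1]
    exact add_le_add_right (add_le_add_right
      (ih.trans (self_le_add_left _ _)) _) _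

inductive AllBwd : {a b : T} → Chain R E a b → Prop where
  | nil (a : T) : AllBwd (.nil a)
  | bwd {a b c : T} (h : R b a) {p : Chain R E b c} : AllBwd p → AllBwd (.bwd a b c h p)

inductive EqBwd : {a b : T} → Chain R E a b → Prop where
  | ofBwd {a b : T} {p : Chain R E a b} : AllBwd p → EqBwd p
  | eq {a b c : T} (h : E a b) {p : Chain R E b c} : EqBwd p → EqBwd (.eq a b c h p)

inductive VForm : {a b : T} → Chain R E a b → Prop where
  | ofEq {a b : T} {p : Chain R E a b} : EqBwd p → VForm p
  | fwd {a b c : T} (h : R a b) {p : Chain R E b c} : VForm p → VForm (.fwd a b c h p)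

lemma AllBwd.rtg : ∀ {a b : T} {p : Chain R E a b}, AllBwd p → Relation.ReflTransGen R b a := by
  intro a b p h
  induction h with
  | nil => exact .refl
  | bwd h _ ih => exact ih.tail h

lemma EqBwd.valley : ∀ {a b : T} {p : Chain R E a b}, EqBwd p →
    ∃ s₁, Relation.ReflTransGen E a s₁ ∧ Relation.ReflTransGen R b s₁ := by
  intro a b p h
  induction h with
  | ofBwd h => exact ⟨_, .refl, h.rtg⟩
  | eq h _ ih =>
    obtain ⟨s₁, h1, h2⟩ := ih
    exact ⟨s₁, h1.head h, h2⟩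

lemma VForm.valley : ∀ {a b : T} {p : Chain R E a b}, VForm p →
    ∃ t₁ s₁, Relation.ReflTransGen R a t₁ ∧ Relation.ReflTransGen R b s₁ ∧
      Relation.ReflTransGen E t₁ s₁ := by
  intro a b p h
  induction h with
  | ofEq h =>
    obtain ⟨s₁, h1, h2⟩ := h.valley
    exact ⟨_, s₁, .refl, h2, h1⟩
  | fwd h _ ih =>
    obtain ⟨t₁, s₁, h1, h2, h3⟩ := ih
    exact ⟨t₁, s₁, h1.head h, h2, h3⟩

end Chains

section Transform

set_option linter.unusedSectionVars false
set_option maxHeartbeats 1000000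

variable [DecidableEq W] {R E : T → T → Prop} {prec : W → W → Prop}

theorem transform (lamR lamE : T → T → W)
    (hsymm : ∀ a b, E a b → E b a)
    (hRR : ∀ t₀ t₁ t₂ u, R t₀ t₁ → R t₀ t₂ → ∀ (p₁ : Path R E t₁ u) (p₂ : Path R E t₂ u),
      DMlt prec (p₁.measure lamR lamE + p₂.measure lamR lamE) {lamR t₀ t₁, lamR t₀ t₂})
    (hRE : ∀ t₀ t₁ t₂ t₂' u, R t₀ t₁ → E t₀ t₂ → R t₂ t₂' →
      ∀ (p₁ : Path R E t₁ u) (p₂ : Path R E t₂' u),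
      DMlt prec (p₁.measure lamR lamE + (lamR t₂ t₂' ::ₘ p₂.measure lamR lamE))
        {lamR t₀ t₁, lamE t₀ t₂})
    (hlc1 : ∀ t₀ t₁ t₂, R t₀ t₁ → R t₀ t₂ →
      ∃ u, Nonempty (Path R E t₁ u) ∧ Nonempty (Path R E t₂ u))
    (hlc2 : ∀ t₀ t₁ t₂, R t₀ t₁ → E t₀ t₂ →
      ∃ u t₂', Nonempty (Path R E t₁ u) ∧ R t₂ t₂' ∧ Nonempty (Path R E t₂' u))
    {t s : T} (c : Chain R E t s) :
    (∃ cv : Chain R E t s, VForm cv ∧ DMle prec (cv.mu lamR lamE) (c.mu lamR lamE)) ∨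
    (∃ c' : Chain R E t s,
      Relation.TransGen (Relation.CutExpand prec) (c'.mu lamR lamE) (c.mu lamR lamE)) := by
  induction c with
  | nil a => exact Or.inl ⟨.nil a, .ofEq (.ofBwd (.nil a)), Or.inl rfl⟩
  | fwd a b s h rest ih =>
    rcases ih with ⟨cv, hvf, hle⟩ | ⟨c', htg⟩
    · exact Or.inl ⟨.fwd a b s h cv, hvf.fwd h, dmle_cons _ hle⟩
    · exact Or.inr ⟨.fwd a b s h c', tg_cons _ htg⟩
  | eq a b s h rest ih =>
    rcases ih with ⟨cv, hvf, hle⟩ | ⟨c', htg⟩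
    · cases cv with
      | nil =>
        refine Or.inl ⟨.eq a b b h (.nil b), .ofEq (.eq h ?_), dmle_cons _ (dmle_cons _ hle)⟩
        exact .ofBwd (.nil b)
      | bwd _ b₂ _ hb p₂ =>
        refine Or.inl ⟨.eq a b s h (.bwd b b₂ s hb p₂), .ofEq (.eq h ?_),
          dmle_cons _ (dmle_cons _ hle)⟩
        cases hvf with
        | ofEq he => exact he
      | eq _ z _ hz p₂ =>
        refine Or.inl ⟨.eq a b s h (.eq b z s hz p₂), .ofEq (.eq h ?_),
          dmle_cons _ (dmle_cons _ hle)⟩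
        cases hvf with
        | ofEq he => exact he
      | fwd _ b' _ h' p₂ =>
        -- cliff:  a ≡ b ⟹ b'
        obtain ⟨u, a', ⟨p₁⟩, ha', ⟨pa⟩⟩ := hlc2 b b' a h' (hsymm a b h)
        have hbound := hRE b b' a a' u h' (hsymm a b h) ha' (p₁.pump hsymm) (pa.pump hsymm)
        refine Or.inr ⟨.fwd a a' s ha'
          ((spliceF pa).append ((spliceRev hsymm p₁).append p₂)), ?_⟩
        refine tg_of_tg_dmle
          (dm_main (C := p₂.mu lamR lamE)
            (N := {lamR a a'} + ((spliceF pa).mu lamR lamE + (spliceRev hsymm p₁).mu lamR lamE))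
            (M := {lamE a b, lamE b a, lamR b b'})
            hbound ?_ (pair_le₂ _ _ _) ?_ ?_)
          (dmle_cons _ (dmle_cons _ hle))
        · -- N ≤ N0
          rw [← Multiset.singleton_add]
          have e1 : {lamR a a'} + ((spliceF pa).mu lamR lamE + (spliceRev hsymm p₁).mu lamR lamE)
              = {lamR a a'} + ((spliceRev hsymm p₁).mu lamR lamE + (spliceF pa).mu lamR lamE) := by
            abel
          have e2 : (p₁.pump hsymm).measure lamR lamE
                + ({lamR a a'} + (pa.pump hsymm).measure lamR lamE)
              = {lamR a a'} + ((p₁.pump hsymm).measure lamR lamE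
                + (pa.pump hsymm).measure lamR lamE) := by abel
          rw [e1, e2]
          exact add_le_add_right (add_le_add (mu_spliceRev_le _ _ _ _) (mu_spliceF_le _ _ _ _)) _
        · simp only [Chain.mu, Chain.mu_append, Multiset.insert_eq_cons,
            ← Multiset.singleton_add]
          abel
        · simp only [Chain.mu, Multiset.insert_eq_cons, ← Multiset.singleton_add]
          abel
    · exact Or.inr ⟨.eq a b s h c', tg_cons _ (tg_cons _ htg)⟩
  | bwd a b s h rest ih =>
    rcases ih with ⟨cv, hvf, hle⟩ | ⟨c', htg⟩
    · cases cv with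
      | nil =>
        exact Or.inl ⟨.bwd a b b h (.nil b), .ofEq (.ofBwd (.bwd h (.nil b))),
          dmle_cons _ hle⟩
      | bwd _ b₂ _ hb p₂ =>
        refine Or.inl ⟨.bwd a b s h (.bwd b b₂ s hb p₂),
          .ofEq (.ofBwd (.bwd h ?_)), dmle_cons _ hle⟩
        cases hvf with
        | ofEq he =>
          cases he with
          | ofBwd hab => exact hab
      | eq _ z _ hz p₂ =>
        -- cliff:  a ⟸ b ≡ z
        obtain ⟨u, z', ⟨p₁⟩, hz', ⟨pz⟩⟩ := hlc2 b a z h hz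
        have hbound := hRE b a z z' u h hz hz' (p₁.pump hsymm) (pz.pump hsymm)
        refine Or.inr ⟨(spliceF p₁).append
          ((spliceRev hsymm pz).append (.bwd z' z s hz' p₂)), ?_⟩
        refine tg_of_tg_dmle
          (dm_main (C := p₂.mu lamR lamE)
            (N := (spliceF p₁).mu lamR lamE
              + ((spliceRev hsymm pz).mu lamR lamE + {lamR z z'}))
            (M := {lamR b a, lamE b z, lamE z b})
            hbound ?_ (pair_le₁ _ _ _) ?_ ?_)
          (dmle_cons _ hle)
        · rw [← Multiset.singleton_add]
          have e1 : (spliceF p₁).mu lamR lamE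
                + ((spliceRev hsymm pz).mu lamR lamE + {lamR z z'})
              = {lamR z z'} + ((spliceF p₁).mu lamR lamE
                + (spliceRev hsymm pz).mu lamR lamE) := by abel
          have e2 : (p₁.pump hsymm).measure lamR lamE
                + ({lamR z z'} + (pz.pump hsymm).measure lamR lamE)
              = {lamR z z'} + ((p₁.pump hsymm).measure lamR lamE
                + (pz.pump hsymm).measure lamR lamE) := by abel
          rw [e1, e2]
          exact add_le_add_right (add_le_add (mu_spliceF_le _ _ _ _) (mu_spliceRev_le _ _ _ _)) _
        · simp only [Chain.mu, Chain.mu_append, Multiset.insert_eq_cons,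
            ← Multiset.singleton_add]
          abel
        · simp only [Chain.mu, Multiset.insert_eq_cons, ← Multiset.singleton_add]
          abel
      | fwd b z s h' p₂ =>
        -- peak:  a ⟸ b ⟹ z
        obtain ⟨u, ⟨p₁⟩, ⟨pz⟩⟩ := hlc1 b a z h h'
        have hbound := hRR b a z u h h' (p₁.pump hsymm) (pz.pump hsymm)
        refine Or.inr ⟨(spliceF p₁).append ((spliceRev hsymm pz).append p₂), ?_⟩
        refine tg_of_tg_dmle
          (dm_main (C := p₂.mu lamR lamE)
            (N := (spliceF p₁).mu lamR lamE + (spliceRev hsymm pz).mu lamR lamE)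
            (M := {lamR b a, lamR b z})
            hbound (add_le_add (mu_spliceF_le _ _ _ _) (mu_spliceRev_le _ _ _ _))
            le_rfl ?_ ?_)
          (dmle_cons _ hle)
        · simp only [Chain.mu, Chain.mu_append, Multiset.insert_eq_cons,
            ← Multiset.singleton_add]
          abel
        · simp only [Chain.mu, Multiset.insert_eq_cons, ← Multiset.singleton_add]
          abel
    · exact Or.inr ⟨.bwd a b s h c', tg_cons _ htg⟩

end Transform

section Main

set_option linter.unusedSectionVars false


variable [DecidableEq W] {R E : T → T → Prop} {prec : W → W → Prop}

lemma chain_of_rtg {t s : T} (h : Relation.ReflTransGen (MixedStep R E) t s) :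
    Nonempty (Chain R E t s) := by
  induction h using Relation.ReflTransGen.head_induction_on with
  | refl => exact ⟨.nil _⟩
  | head hstep _ ih =>
    obtain ⟨c⟩ := ih
    rcases hstep with h' | h' | h'
    · exact ⟨.fwd _ _ _ h' c⟩
    · exact ⟨.bwd _ _ _ h' c⟩
    · exact ⟨.eq _ _ _ h' c⟩

lemma path_of_rtgR {t s : T} (h : Relation.ReflTransGen R t s) :
    Nonempty (Path R E t s) := by
  induction h using Relation.ReflTransGen.head_induction_on with
  | refl => exact ⟨.nil _⟩
  | head hstep _ ih =>
    obtain ⟨c⟩ := ih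
    exact ⟨.red _ _ _ hstep c⟩

lemma path_of_rtgE {t s : T} (h : Relation.ReflTransGen E t s) :
    Nonempty (Path R E t s) := by
  induction h using Relation.ReflTransGen.head_induction_on with
  | refl => exact ⟨.nil _⟩
  | head hstep _ ih =>
    obtain ⟨c⟩ := ih
    exact ⟨.eq _ _ _ hstep c⟩

theorem chain_valley [IsWellOrder W prec] (lamR lamE : T → T → W)
    (hsymm : ∀ a b, E a b → E b a)
    (hRR : ∀ t₀ t₁ t₂ u, R t₀ t₁ → R t₀ t₂ → ∀ (p₁ : Path R E t₁ u) (p₂ : Path R E t₂ u),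
      DMlt prec (p₁.measure lamR lamE + p₂.measure lamR lamE) {lamR t₀ t₁, lamR t₀ t₂})
    (hRE : ∀ t₀ t₁ t₂ t₂' u, R t₀ t₁ → E t₀ t₂ → R t₂ t₂' →
      ∀ (p₁ : Path R E t₁ u) (p₂ : Path R E t₂' u),
      DMlt prec (p₁.measure lamR lamE + (lamR t₂ t₂' ::ₘ p₂.measure lamR lamE))
        {lamR t₀ t₁, lamE t₀ t₂})
    (hlc1 : ∀ t₀ t₁ t₂, R t₀ t₁ → R t₀ t₂ →
      ∃ u, Nonempty (Path R E t₁ u) ∧ Nonempty (Path R E t₂ u))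
    (hlc2 : ∀ t₀ t₁ t₂, R t₀ t₁ → E t₀ t₂ →
      ∃ u t₂', Nonempty (Path R E t₁ u) ∧ R t₂ t₂' ∧ Nonempty (Path R E t₂' u))
    {t s : T} (c : Chain R E t s) :
    ∃ t₁ s₁, Relation.ReflTransGen R t t₁ ∧ Relation.ReflTransGen R s s₁ ∧
      Relation.ReflTransGen E t₁ s₁ := by
  have wf : WellFounded (Relation.TransGen (Relation.CutExpand prec)) :=
    (WellFounded.cutExpand (IsWellFounded.wf)).transGen
  have H : ∀ m : Multiset W, ∀ (t s : T) (c : Chain R E t s), c.mu lamR lamE = m →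
      ∃ t₁ s₁, Relation.ReflTransGen R t t₁ ∧ Relation.ReflTransGen R s s₁ ∧
        Relation.ReflTransGen E t₁ s₁ := by
    intro m
    refine WellFounded.induction wf
      (C := fun m => ∀ (t s : T) (c : Chain R E t s), c.mu lamR lamE = m →
        ∃ t₁ s₁, Relation.ReflTransGen R t t₁ ∧ Relation.ReflTransGen R s s₁ ∧
          Relation.ReflTransGen E t₁ s₁) m ?_
    intro m IH t s c hm
    subst hm
    rcases transform lamR lamE hsymm hRR hRE hlc1 hlc2 c with ⟨cv, hvf, _⟩ | ⟨c', htg⟩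
    · exact hvf.valley
    · exact IH _ htg t s c' rfl
  exact H _ t s c rfl

end Main

theorem confluent_modulo_iff_locally_confluent_modulo
    (R E : T → T → Prop) (hsymm : ∀ a b, E a b → E b a)
    (prec : W → W → Prop) [DecidableEq W] [IsWellOrder W prec]
    (lamR lamE : T → T → W)
    (hRR : ∀ (t₀ t₁ t₂ u : T), R t₀ t₁ → R t₀ t₂ →
      ∀ (p₁ : Path R E t₁ u) (p₂ : Path R E t₂ u),
        DMlt prec (p₁.measure lamR lamE + p₂.measure lamR lamE)
          {lamR t₀ t₁, lamR t₀ t₂})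
    (hRE : ∀ (t₀ t₁ t₂ t₂' u : T), R t₀ t₁ → E t₀ t₂ → R t₂ t₂' →
      ∀ (p₁ : Path R E t₁ u) (p₂ : Path R E t₂' u),
        DMlt prec (p₁.measure lamR lamE + (lamR t₂ t₂' ::ₘ p₂.measure lamR lamE))
          {lamR t₀ t₁, lamE t₀ t₂}) :
    ConfluentModulo R E ↔ LocallyConfluentModulo R E := by
  constructor
  · intro hcm
    constructor
    · intro t₀ t₁ t₂ h1 h2
      have hchain : Relation.ReflTransGen (MixedStep R E) t₁ t₂ :=
        Relation.ReflTransGen.head (Or.inr (Or.inl h1))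
          (Relation.ReflTransGen.single (Or.inl h2))
      obtain ⟨u₁, u₂, hr1, hr2, he⟩ := hcm t₁ t₂ hchain
      obtain ⟨pa⟩ := path_of_rtgR (E := E) hr1
      obtain ⟨pb⟩ := path_of_rtgE (R := R) he
      obtain ⟨pc⟩ := path_of_rtgR (E := E) hr2
      exact ⟨u₂, ⟨pa.append pb⟩, ⟨pc⟩⟩
    · intro t₀ t₁ t₂ h1 h2
      have hchain : Relation.ReflTransGen (MixedStep R E) t₁ t₂ :=
        Relation.ReflTransGen.head (Or.inr (Or.inl h1))
          (Relation.ReflTransGen.single (Or.inr (Or.inr h2)))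
      obtain ⟨u₁, u₂, hr1, hr2, he⟩ := hcm t₁ t₂ hchain
      obtain ⟨pa⟩ := path_of_rtgR (E := E) hr1
      obtain ⟨pb⟩ := path_of_rtgE (R := R) he
      rcases hr2.cases_head with heq | ⟨c, hstep, hrest⟩
      · -- the reduction sequence from t₂ is empty: derive a contradiction via a loop
        subst heq
        exfalso
        set L : Path R E t₁ t₁ := (pa.append pb).append
          (.eq t₂ t₀ t₁ (hsymm t₀ t₂ h2) (.red t₀ t₁ t₁ h1 (.nil t₁))) with hL
        have hmem : lamR t₀ t₁ ∈ L.measure lamR lamE := by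
          have e : L.measure lamR lamE = (pa.measure lamR lamE + pb.measure lamR lamE)
              + (lamE t₂ t₀ ::ₘ lamR t₀ t₁ ::ₘ 0) := by
            rw [hL, Path.measure_append, Path.measure_append]
            rfl
          rw [e]
          exact Multiset.mem_add.2 (Or.inr
            (Multiset.mem_cons.2 (Or.inr (Multiset.mem_cons_self _ _))))
        have hcnt : 1 ≤ (L.measure lamR lamE).count (lamR t₀ t₁) :=
          Multiset.one_le_count_iff_mem.2 hmem
        have hd := hRR t₀ t₁ t₁ t₁ h1 h1 L L
        have hirr : ∀ x : W, ¬ prec x x :=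
          (WellFounded.isIrrefl (IsWellFounded.wf (r := prec))).irrefl
        have hle1 := dm_pair_count hirr hd
        rw [Multiset.count_add] at hle1
        omega
      · obtain ⟨pc⟩ := path_of_rtgR (E := E) hrest
        exact ⟨u₂, c, ⟨pa.append pb⟩, hstep, ⟨pc⟩⟩
  · intro hlc t s hchain
    obtain ⟨c⟩ := chain_of_rtg hchain
    exact chain_valley lamR lamE hsymm hRR hRE hlc.1 hlc.2 c


end Stmt0
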